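/- For every real a > 0, the analytic functions h(z) = (z + a)/(2√(1 + a²)) and g(z) = (z − a)/(2√(1 + a²)) satisfy |h(z)| + |g(z)| < 1 for all z in the unit disk 𝔻, yet with a_0 = |h(0)|, a_1 = 1/(2√(1+a²)), b_0 = |g(0)|, b_1 = 1/(2√(1+a²)) denoting the moduli of their Taylor coefficients, one has (|a_0| + |b_0|) + (|a_1| + |b_1|) r > 1 for every r with √(1 + a²) − a < r < 1. In particular, since √(1+a²) − a → 0 as a → ∞, the Bohr inequality |a_0| + |b_0| + ∑_{k=1}^∞ (|a_k| + |b_k|) r^k ≤ 1 fails for pairs (h, g) with |h| + |g| ≤ 1 at every fixed positive radius without the assumption g(0) = 0. -/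

import Mathlib

/-- The condition `g(0) = 0` in the Bohr inequality for pairs cannot be dropped:
for every `a > 0` the pair `h(z) = (z+a)/(2√(1+a²))`, `g(z) = (z−a)/(2√(1+a²))`
satisfies `|h| + |g| < 1` on the unit disk, yet
`(|a₀| + |b₀|) + (|a₁| + |b₁|) r > 1` for every `√(1+a²) − a < r < 1`;
moreover `√(1+a²) − a → 0` as `a → ∞`, so no positive Bohr radius is possible. -/
theorem bohr_pair_needs_g0
    (a : ℝ) (ha : 0 < a)
    (h g : ℂ → ℂ)
    (hh : ∀ z : ℂ, h z = (z + (a : ℂ)) / (2 * Real.sqrt (1 + a ^ 2)))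
    (hg : ∀ z : ℂ, g z = (z - (a : ℂ)) / (2 * Real.sqrt (1 + a ^ 2))) :
    (∀ z : ℂ, ‖z‖ < 1 → ‖h z‖ + ‖g z‖ < 1) ∧
    (∀ r : ℝ, Real.sqrt (1 + a ^ 2) - a < r → r < 1 →
      1 < (‖h 0‖ + ‖g 0‖) +
        (1 / (2 * Real.sqrt (1 + a ^ 2)) + 1 / (2 * Real.sqrt (1 + a ^ 2))) * r) ∧
    Filter.Tendsto (fun t : ℝ => Real.sqrt (1 + t ^ 2) - t)
      Filter.atTop (nhds 0) := by
  set s := Real.sqrt (1 + a ^ 2) with hs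
  have hs0 : 0 < s := Real.sqrt_pos.mpr (by positivity)
  have hssq : s ^ 2 = 1 + a ^ 2 := Real.sq_sqrt (by positivity)
  have hnormden : ‖(2 * (s : ℂ))‖ = 2 * s := by
    rw [norm_mul]
    simp [Complex.norm_real, abs_of_pos hs0]
  refine ⟨?_, ?_, ?_⟩
  · intro z hz
    have h1 : ‖h z‖ = ‖z + (a : ℂ)‖ / (2 * s) := by
      rw [hh, norm_div, hnormden]
    have h2 : ‖g z‖ = ‖z - (a : ℂ)‖ / (2 * s) := by
      rw [hg, norm_div, hnormden]
    set u := ‖z + (a : ℂ)‖ with hu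
    set v := ‖z - (a : ℂ)‖ with hv
    have hu0 : 0 ≤ u := norm_nonneg _
    have hv0 : 0 ≤ v := norm_nonneg _
    have hpar : u * u + v * v = 2 * (‖z‖ * ‖z‖ + a * a) := by
      have := parallelogram_law_with_norm ℂ z ((a : ℂ))
      simpa [Complex.norm_real, abs_of_pos ha, ← pow_two] using this
    have huv : u * v < 1 + a ^ 2 := by
      have : u * v = ‖(z + (a : ℂ)) * (z - (a : ℂ))‖ := (norm_mul _ _).symm
      rw [this]
      have heq : (z + (a : ℂ)) * (z - (a : ℂ)) = z * z - (a : ℂ) * (a : ℂ) := by ring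
      rw [heq]
      calc ‖z * z - (a : ℂ) * (a : ℂ)‖ ≤ ‖z * z‖ + ‖(a : ℂ) * (a : ℂ)‖ := norm_sub_le _ _
        _ = ‖z‖ * ‖z‖ + a * a := by
            rw [norm_mul, norm_mul]
            simp [Complex.norm_real, abs_of_pos ha]
        _ < 1 + a ^ 2 := by nlinarith [norm_nonneg z]
    have hsum : u + v < 2 * s := by
      nlinarith [norm_nonneg z, mul_self_nonneg (u + v), mul_self_nonneg (u - v)]
    rw [h1, h2, ← add_div, div_lt_one (by positivity)]
    linarith
  · intro r hr hr1
    have h0 : ‖h 0‖ = a / (2 * s) := by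
      rw [hh, norm_div, hnormden]
      simp [Complex.norm_real, abs_of_pos ha]
    have g0 : ‖g 0‖ = a / (2 * s) := by
      rw [hg, norm_div, hnormden]
      simp [Complex.norm_real, abs_of_pos ha]
    rw [h0, g0]
    rw [← add_div]
    have key : s < a + r := by linarith
    have : (a + a) / (2 * s) + (1 / (2 * s) + 1 / (2 * s)) * r = (a + r) / s := by
      field_simp; ring
    rw [this]
    rw [lt_div_iff₀ hs0]
    linarith
  · have hub : ∀ᶠ t : ℝ in Filter.atTop, Real.sqrt (1 + t ^ 2) - t ≤ 1 / t := by
      filter_upwards [Filter.eventually_ge_atTop (1 : ℝ)] with t ht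
      have ht0 : 0 < t := by linarith
      have h1 : (1 : ℝ) + t ^ 2 ≤ (t + 1 / t) ^ 2 := by
        have h2 : (t + 1 / t) ^ 2 = t ^ 2 + 2 + (1 / t) ^ 2 := by
          field_simp; ring
        nlinarith [sq_nonneg (1 / t)]
      have h3 : Real.sqrt (1 + t ^ 2) ≤ t + 1 / t := by
        calc Real.sqrt (1 + t ^ 2) ≤ Real.sqrt ((t + 1 / t) ^ 2) := Real.sqrt_le_sqrt h1
          _ = t + 1 / t := Real.sqrt_sq (by positivity)
      linarith
    have hlb : ∀ᶠ t : ℝ in Filter.atTop, (0 : ℝ) ≤ Real.sqrt (1 + t ^ 2) - t := by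
      filter_upwards [Filter.eventually_ge_atTop (0 : ℝ)] with t ht
      have : t ≤ Real.sqrt (1 + t ^ 2) := by
        rw [Real.le_sqrt ht]
        · linarith
        · positivity
      linarith
    exact tendsto_of_tendsto_of_tendsto_of_le_of_le' tendsto_const_nhds
      (tendsto_const_nhds.div_atTop Filter.tendsto_id) hlb hub
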